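/- arXiv:2510.12829 — 2 statements merged into one kernel-verified Lean document; each statement's English description precedes it below -/
import Mathlib

section
/- Let f : ℝ^d → ℝ be convex and differentiable with L-Lipschitz gradient (L-smooth), and let η > 0. For any sequence of implicit (backward Euler) iterates satisfying z_{n+1} = z_n − η∇f(z_{n+1}), the sequence n ↦ f(z_n) is convex: f(z_{n+2}) − 2f(z_{n+1}) + f(z_n) ≥ 0 for all n. Moreover, if f is μ-strongly convex for some μ > 0, then the one-step decreases Δ_n = f(z_n) − f(z_{n+1}) satisfy Δ_{n+1} < Δ_n for every n with ∇f(z_n) ≠ 0. -/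
open RealInnerProductSpace

lemma grad_ineq {E : Type*} [NormedAddCommGroup E] [InnerProductSpace ℝ E] [CompleteSpace E]
    (f : E → ℝ) (hdiff : Differentiable ℝ f) (hconv : ConvexOn ℝ Set.univ f)
    (u v : E) : f u + ⟪gradient f u, v - u⟫ ≤ f v := by
  by_cases h : v = u
  · simp [h]
  set g : ℝ → ℝ := fun t => f (u + t • (v - u)) with hg
  have hgc : ConvexOn ℝ Set.univ g := by
    have := hconv.comp_affineMap (AffineMap.lineMap u v)
    have he : (f ∘ (AffineMap.lineMap u v)) = g := by
      funext t
      simp [g, AffineMap.lineMap_apply_module', add_comm]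
    rw [he] at this
    simpa using this
  have hc : HasDerivAt (fun t : ℝ => u + t • (v - u)) (v - u) 0 := by
    simpa using ((hasDerivAt_id (0:ℝ)).smul_const (v - u)).const_add u
  have hF : HasFDerivAt f ((InnerProductSpace.toDual ℝ E) (gradient f u)) u :=
    (hdiff u).hasGradientAt.hasFDerivAt
  have hd : HasDerivAt g ⟪gradient f u, v - u⟫ 0 := by
    have := HasFDerivAt.comp_hasDerivAt 0 (by simpa using hF) hc
    exact this.congr_deriv (by simp)
  have h01 : (0:ℝ) < 1 := one_pos
  have := hgc.le_slope_of_hasDerivAt (Set.mem_univ 0) (Set.mem_univ 1) h01 hd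
  rw [slope_def_field] at this
  simp [g] at this
  have hi : ⟪gradient f u, v - u⟫ = (fderiv ℝ f u) v - (fderiv ℝ f u) u := by simp
  linarith


/-- **The implicit (backward Euler) method convexifies the optimization curve.**
Let `f : E → ℝ` be convex and differentiable with `L`-Lipschitz gradient, and let
`η > 0`.  For any implicit iterates `z (n+1) = z n - η • ∇f (z (n+1))`, the
sequence `n ↦ f (z n)` is convex: `f (z (n+2)) - 2 f (z (n+1)) + f (z n) ≥ 0`.
Moreover, if `f` is `μ`-strongly convex for some `μ > 0`, then the one-step
decreases `Δ n = f (z n) - f (z (n+1))` satisfy `Δ (n+1) < Δ n` for every `n`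
with `∇f (z n) ≠ 0`. -/
theorem implicit_gd_curve_convex
    {E : Type*} [NormedAddCommGroup E] [InnerProductSpace ℝ E]
    [FiniteDimensional ℝ E]
    (f : E → ℝ) (hdiff : Differentiable ℝ f) (hconv : ConvexOn ℝ Set.univ f)
    (L : ℝ) (hL : 0 < L)
    (hsmooth : ∀ u v : E, ‖gradient f u - gradient f v‖ ≤ L * ‖u - v‖)
    (η : ℝ) (hη : 0 < η)
    (z : ℕ → E)
    (hz : ∀ n, z (n + 1) = z n - η • gradient f (z (n + 1))) :
    (∀ n, f (z (n + 2)) - 2 * f (z (n + 1)) + f (z n) ≥ 0) ∧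
      (∀ μ : ℝ, 0 < μ →
        (∀ u v : E, f v ≥ f u + ⟪gradient f u, v - u⟫ + μ / 2 * ‖v - u‖ ^ 2) →
        ∀ n, gradient f (z n) ≠ 0 →
          f (z (n + 1)) - f (z (n + 2)) < f (z n) - f (z (n + 1))) := by
  set g : ℕ → E := fun n => gradient f (z n) with hgdef
  -- step differences
  have hstep : ∀ n, z n - z (n + 1) = η • g (n + 1) := by
    intro n; rw [hz n]; abel
  have hstep' : ∀ n, z (n + 1) - z n = -(η • g (n + 1)) := by
    intro n; rw [hz n]; abel
  -- key inequality 1 : f (z n) - f (z (n+1)) ≥ η ‖g (n+1)‖²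
  have key1 : ∀ n, η * ‖g (n + 1)‖ ^ 2 ≤ f (z n) - f (z (n + 1)) := by
    intro n
    have := grad_ineq f hdiff hconv (z (n + 1)) (z n)
    rw [show z n - z (n + 1) = η • g (n + 1) from hstep n,
      real_inner_smul_right, real_inner_self_eq_norm_sq] at this
    linarith
  -- key inequality 2 : f (z (n+1)) - f (z (n+2)) ≤ η ⟪g (n+1), g (n+2)⟫
  have key2 : ∀ n, f (z (n + 1)) - f (z (n + 2)) ≤ η * ⟪g (n + 1), g (n + 2)⟫ := by
    intro n
    have := grad_ineq f hdiff hconv (z (n + 1)) (z (n + 2))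
    rw [show z (n + 2) - z (n + 1) = -(η • g (n + 2)) from hstep' (n + 1),
      inner_neg_right, real_inner_smul_right] at this
    linarith
  -- key inequality 3 : ⟪g (n+1), g (n+2)⟫ ≤ ‖g (n+1)‖²
  have key3 : ∀ n, ⟪g (n + 1), g (n + 2)⟫ ≤ ‖g (n + 1)‖ ^ 2 := by
    intro n
    have h1 := grad_ineq f hdiff hconv (z (n + 1)) (z (n + 2))
    have h2 := grad_ineq f hdiff hconv (z (n + 2)) (z (n + 1))
    rw [show z (n + 2) - z (n + 1) = -(η • g (n + 2)) from hstep' (n + 1),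
      inner_neg_right, real_inner_smul_right] at h1
    rw [show z (n + 1) - z (n + 2) = η • g (n + 2) from hstep (n + 1),
      real_inner_smul_right, real_inner_self_eq_norm_sq] at h2
    -- so ‖g (n+2)‖² ≤ ⟪g (n+1), g (n+2)⟫
    have hm : ‖g (n + 2)‖ ^ 2 ≤ ⟪g (n + 1), g (n + 2)⟫ := by
      have hsum : η * ‖g (n + 2)‖ ^ 2 ≤ η * ⟪g (n + 1), g (n + 2)⟫ := by linarith
      exact le_of_mul_le_mul_left hsum hη
    have hcs : ⟪g (n + 1), g (n + 2)⟫ ≤ ‖g (n + 1)‖ * ‖g (n + 2)‖ :=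
      real_inner_le_norm _ _
    nlinarith [sq_nonneg (‖g (n + 1)‖ - ‖g (n + 2)‖)]
  constructor
  · intro n
    have h1 := key1 n
    have h2 := key2 n
    have h3 := key3 n
    nlinarith
  · intro μ hμ hsc n hgn
    -- g (n+1) ≠ 0
    have hgn1 : g (n + 1) ≠ 0 := by
      intro h0
      apply hgn
      have h0' : gradient f (z (n + 1)) = 0 := h0
      have hz1 : z (n + 1) = z n := by rw [hz n, h0', smul_zero, sub_zero]
      rw [← hz1]; exact h0'
    -- strong convexity versions
    have s1 := hsc (z (n + 1)) (z n)
    rw [show z n - z (n + 1) = η • g (n + 1) from hstep n,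
      real_inner_smul_right, real_inner_self_eq_norm_sq, norm_smul] at s1
    have s2 := hsc (z (n + 1)) (z (n + 2))
    rw [show z (n + 2) - z (n + 1) = -(η • g (n + 2)) from hstep' (n + 1),
      inner_neg_right, real_inner_smul_right, norm_neg, norm_smul] at s2
    have h3 := key3 n
    have hpos : 0 < ‖g (n + 1)‖ := norm_pos_iff.mpr hgn1
    have habs : ‖η‖ = η := abs_of_pos hη
    rw [habs] at s1 s2
    nlinarith [norm_nonneg (g (n + 2)), sq_nonneg (η * ‖g (n + 2)‖), mul_pos hμ (mul_pos (mul_pos hη hη) (mul_pos hpos hpos))]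
end

section
/- Let B be an invertible real n×n matrix with columns b_1, …, b_n, and let b_1*, …, b_n* be the columns of (B⁻¹)ᵀ (the dual basis of the columns of B). Suppose S, λ, λ* are positive reals with ‖b_i‖·‖b_i*‖ ≤ S for all i, ‖b_i‖ ≥ λ for all i, and ‖b_i*‖ ≥ λ* for all i. Then the condition number satisfies ‖B‖·‖B⁻¹‖ ≤ n·S²/(λ·λ*), where ‖·‖ is the ℓ²→ℓ² operator norm. -/
open Matrix

/-- Euclidean (`ℓ²`) norm of a vector in `ℝⁿ` given as a plain function. -/
noncomputable def eucNorm {n : ℕ} (v : Fin n → ℝ) : ℝ :=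
  ‖(WithLp.equiv 2 (Fin n → ℝ)).symm v‖

/-- `ℓ² → ℓ²` operator norm of a real `n × n` matrix. -/
noncomputable def l2OpNorm {n : ℕ} (M : Matrix (Fin n) (Fin n) ℝ) : ℝ :=
  ‖(Matrix.toEuclideanCLM (𝕜 := ℝ) M :
      EuclideanSpace ℝ (Fin n) →L[ℝ] EuclideanSpace ℝ (Fin n))‖


open scoped Matrix.Norms.L2Operator in
lemma l2OpNorm_eq_scoped {n : ℕ} (M : Matrix (Fin n) (Fin n) ℝ) : l2OpNorm M = ‖M‖ := by
  rw [l2OpNorm, Matrix.l2_opNorm_def]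
  congr 1

lemma l2OpNorm_transpose {n : ℕ} (M : Matrix (Fin n) (Fin n) ℝ) :
    l2OpNorm Mᵀ = l2OpNorm M := by
  rw [l2OpNorm_eq_scoped, l2OpNorm_eq_scoped, ← Matrix.conjTranspose_eq_transpose_of_trivial]
  exact Matrix.l2_opNorm_conjTranspose M

lemma l2OpNorm_le_cols {n : ℕ} (M : Matrix (Fin n) (Fin n) ℝ) (C : ℝ) (hC : 0 ≤ C)
    (h : ∀ i, eucNorm (fun j => M j i) ≤ C) :
    l2OpNorm M ≤ Real.sqrt n * C := by
  rw [l2OpNorm]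
  apply ContinuousLinearMap.opNorm_le_bound _ (by positivity)
  intro x
  set v : Fin n → ℝ := WithLp.equiv 2 (Fin n → ℝ) x with hv
  have hmul : M *ᵥ v = ∑ j, v j • (fun i => M i j) := by
    funext i
    simp [Matrix.mulVec, dotProduct, Finset.sum_apply, mul_comm]
  have hx : (Matrix.toEuclideanCLM (𝕜 := ℝ) M) x
      = ∑ j, v j • (WithLp.equiv 2 (Fin n → ℝ)).symm (fun i => M i j) := by
    have h0 : (Matrix.toEuclideanCLM (𝕜 := ℝ) M) x
        = (WithLp.linearEquiv 2 ℝ (Fin n → ℝ)).symm (M *ᵥ v) := rfl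
    rw [h0, hmul, map_sum]
    refine Finset.sum_congr rfl fun j _ => ?_
    rw [_root_.map_smul]
    rfl
  rw [hx]
  calc ‖∑ j, v j • (WithLp.equiv 2 (Fin n → ℝ)).symm (fun i => M i j)‖
      ≤ ∑ j, ‖v j • (WithLp.equiv 2 (Fin n → ℝ)).symm (fun i => M i j)‖ :=
        norm_sum_le _ _
    _ = ∑ j, |v j| * eucNorm (fun i => M i j) := by
        simp [norm_smul, eucNorm, Real.norm_eq_abs]
    _ ≤ ∑ j, |v j| * C := by
        refine Finset.sum_le_sum fun j _ => ?_
        exact mul_le_mul_of_nonneg_left (h j) (abs_nonneg _)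
    _ = (∑ j, |v j|) * C := by rw [← Finset.sum_mul]
    _ ≤ (Real.sqrt n * ‖x‖) * C := by
        refine mul_le_mul_of_nonneg_right ?_ hC
        have h1 : (∑ j, |v j|) ^ 2 ≤ (n : ℝ) * ∑ j, |v j| ^ 2 := by
          have := sq_sum_le_card_mul_sum_sq (s := Finset.univ) (f := fun j => |v j|)
          simpa using this
        have h2 : ‖x‖ = Real.sqrt (∑ j, |v j| ^ 2) := by
          rw [EuclideanSpace.norm_eq]
          simp [Real.norm_eq_abs, v]
        have h3 : (0:ℝ) ≤ ∑ j, |v j| := Finset.sum_nonneg fun j _ => abs_nonneg _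
        calc (∑ j, |v j|) = Real.sqrt ((∑ j, |v j|)^2) := (Real.sqrt_sq h3).symm
          _ ≤ Real.sqrt ((n : ℝ) * ∑ j, |v j| ^ 2) := Real.sqrt_le_sqrt h1
          _ = Real.sqrt n * Real.sqrt (∑ j, |v j| ^ 2) := Real.sqrt_mul (by positivity) _
          _ = Real.sqrt n * ‖x‖ := by rw [h2]
    _ = Real.sqrt n * C * ‖x‖ := by ring

/-- **Seysen-style condition number bound.**  Let `B` be an invertible real
`n × n` matrix with columns `bᵢ`, and let `bᵢ*` be the columns of `(B⁻¹)ᵀ`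
(the dual basis).  If `‖bᵢ‖ * ‖bᵢ*‖ ≤ S`, `‖bᵢ‖ ≥ λ` and `‖bᵢ*‖ ≥ λ*` for all
`i`, with `S, λ, λ* > 0`, then `‖B‖ * ‖B⁻¹‖ ≤ n * S² / (λ * λ*)` for the
`ℓ² → ℓ²` operator norm. -/
theorem condition_number_bound {n : ℕ} (B : Matrix (Fin n) (Fin n) ℝ)
    (hB : IsUnit B.det)
    (S lam lamStar : ℝ) (hS : 0 < S) (hlam : 0 < lam) (hlamStar : 0 < lamStar)
    (hprod : ∀ i, eucNorm (fun j => B j i) * eucNorm (fun j => (B⁻¹)ᵀ j i) ≤ S)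
    (hlow : ∀ i, eucNorm (fun j => B j i) ≥ lam)
    (hlowStar : ∀ i, eucNorm (fun j => (B⁻¹)ᵀ j i) ≥ lamStar) :
    l2OpNorm B * l2OpNorm B⁻¹ ≤ n * S ^ 2 / (lam * lamStar) := by
  have hBle : l2OpNorm B ≤ Real.sqrt n * (S / lamStar) := by
    apply l2OpNorm_le_cols _ _ (by positivity)
    intro i
    rw [le_div_iff₀ hlamStar]
    calc eucNorm (fun j => B j i) * lamStar
        ≤ eucNorm (fun j => B j i) * eucNorm (fun j => (B⁻¹)ᵀ j i) :=
          mul_le_mul_of_nonneg_left (hlowStar i) (norm_nonneg _)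
      _ ≤ S := hprod i
  have hBinvle : l2OpNorm B⁻¹ ≤ Real.sqrt n * (S / lam) := by
    rw [← l2OpNorm_transpose]
    apply l2OpNorm_le_cols _ _ (by positivity)
    intro i
    rw [le_div_iff₀ hlam]
    calc eucNorm (fun j => (B⁻¹)ᵀ j i) * lam
        ≤ eucNorm (fun j => (B⁻¹)ᵀ j i) * eucNorm (fun j => B j i) :=
          mul_le_mul_of_nonneg_left (hlow i) (norm_nonneg _)
      _ = eucNorm (fun j => B j i) * eucNorm (fun j => (B⁻¹)ᵀ j i) := mul_comm _ _
      _ ≤ S := hprod i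
  have h0 : (0:ℝ) ≤ l2OpNorm B := norm_nonneg _
  calc l2OpNorm B * l2OpNorm B⁻¹
      ≤ (Real.sqrt n * (S / lamStar)) * (Real.sqrt n * (S / lam)) :=
        mul_le_mul hBle hBinvle (norm_nonneg _) (le_trans h0 hBle)
    _ = (Real.sqrt n * Real.sqrt n) * ((S / lamStar) * (S / lam)) := by ring
    _ = n * ((S / lamStar) * (S / lam)) := by
        rw [Real.mul_self_sqrt (Nat.cast_nonneg n)]
    _ = n * S ^ 2 / (lam * lamStar) := by field_simp
end
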